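/- Let (λₖ²)ₖ≥₁ and (μₖ²)ₖ≥₁ satisfy λ₁² > μ₁² > λ₂² > μ₂² > … > 0 with λₖ² → 0, set σ = {λₖ² : k ≥ 1} ∪ {0}, and let Φ(z) = ∏ₖ≥₁ (z − μₖ²)/(z − λₖ²). Define aₙ = (λₙ² − μₙ²) · ∏_{k≠n} (λₙ² − μₖ²)/(λₙ² − λₖ²) for each n ≥ 1. Then aₙ > 0, ∑ₙ≥₁ aₙ/λₙ² ≤ 1, the series ∑ₙ≥₁ aₙ/(λₙ² − z) converges uniformly on compact subsets of ℂ∖σ, and Φ(z) = 1 − ∑ₙ≥₁ aₙ/(λₙ² − z) for all z ∈ ℂ∖σ. -/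

import Mathlib

open Filter Topology Finset

noncomputable def pfC {F : Type*} [Field F] (L M : ℕ → F) (N n : ℕ) : F :=
  (L n - M n) * ∏ k ∈ (Finset.range N).erase n, (L n - M k) / (L n - L k)

lemma pfC_succ_self {F : Type*} [Field F] (L M : ℕ → F) (N : ℕ) :
    pfC L M (N + 1) N = (L N - M N) * ∏ k ∈ Finset.range N, (L N - M k) / (L N - L k) := by
  rw [pfC, Finset.range_add_one, Finset.erase_insert (Finset.notMem_range_self)]

lemma pfC_succ_of_lt {F : Type*} [Field F] (L M : ℕ → F) {N n : ℕ} (h : n < N) :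
    pfC L M (N + 1) n = (L n - M N) / (L n - L N) * pfC L M N n := by
  have hne : (N : ℕ) ≠ n := Nat.ne_of_gt h
  rw [pfC, pfC, Finset.range_add_one, Finset.erase_insert_of_ne hne,
    Finset.prod_insert (by simp)]
  ring

lemma partialFraction {F : Type*} [Field F] (L M : ℕ → F) (hinj : Function.Injective L) :
    ∀ N : ℕ, ∀ z : F, (∀ k ∈ Finset.range N, z ≠ L k) →
      ∏ k ∈ Finset.range N, (z - M k) / (z - L k)
        = 1 - ∑ n ∈ Finset.range N, pfC L M N n / (L n - z) := by
  intro N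
  induction N with
  | zero => simp
  | succ N IH =>
    intro z hz
    have hzN : z ≠ L N := hz N (by simp)
    have hz' : ∀ k ∈ Finset.range N, z ≠ L k := fun k hk =>
      hz k (Finset.mem_range.2 (Nat.lt_succ_of_lt (Finset.mem_range.1 hk)))
    have hLN : ∀ k ∈ Finset.range N, L N ≠ L k := by
      intro k hk h
      exact (Nat.ne_of_lt (Finset.mem_range.1 hk)).symm (hinj h)
    have IHN := IH (L N) hLN
    rw [Finset.prod_range_succ, IH z hz', Finset.sum_range_succ, pfC_succ_self, IHN]
    have hsub : ∀ n ∈ Finset.range N, L n - z ≠ 0 := fun n hn =>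
      sub_ne_zero.2 fun h => (hz' n hn) h.symm
    have hsubN : L N - z ≠ 0 := sub_ne_zero.2 fun h => hzN h.symm
    have hsubL : ∀ n ∈ Finset.range N, L n - L N ≠ 0 := fun n hn =>
      sub_ne_zero.2 fun h => (hLN n hn) h.symm
    have key : ∀ n ∈ Finset.range N,
        pfC L M (N + 1) n / (L n - z)
          = pfC L M N n / (L n - z) * ((z - M N) / (z - L N))
            + pfC L M N n / (L n - L N) * ((L N - M N) / (L N - z)) := by
      intro n hn
      rw [pfC_succ_of_lt L M (Finset.mem_range.1 hn)]
      have h1 := hsub n hn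
      have h2 := hsubN
      have h3 := hsubL n hn
      have h4 : z - L N ≠ 0 := fun h => h2 (by linear_combination -h)
      field_simp
      ring
    rw [Finset.sum_congr rfl key, Finset.sum_add_distrib, ← Finset.sum_mul, ← Finset.sum_mul]
    have hq : (z - M N) / (z - L N) = 1 - (L N - M N) / (L N - z) := by
      have h4 : z - L N ≠ 0 := fun h => hsubN (by linear_combination -h)
      field_simp
      ring
    rw [hq]
    ring


/-- The set `σ = {λₖ² : k ≥ 1} ∪ {0}`, as a subset of `ℂ`. -/
def sigmaSet (lam : ℕ → ℝ) : Set ℂ :=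
  insert (0 : ℂ) (Set.range fun k : ℕ => ((lam k : ℝ) : ℂ))

/-- Let `(λₖ²)`, `(μₖ²)` (here `lam`, `mu`) satisfy
`λ₁² > μ₁² > λ₂² > μ₂² > … > 0` with `λₖ² → 0`, `σ = {λₖ²} ∪ {0}`, and let
`Φ(z) = ∏ₖ (z − μₖ²)/(z − λₖ²)` (pointwise limit of partial products). Let
`aₙ = (λₙ² − μₙ²)·∏_{k≠n} (λₙ² − μₖ²)/(λₙ² − λₖ²)` (characterized as the limit of the
partial products). Then `aₙ > 0`, `∑ aₙ/λₙ²` converges with sum `≤ 1`, the series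
`∑ aₙ/(λₙ² − z)` converges uniformly on compact subsets of `ℂ∖σ`, and
`Φ(z) = 1 − ∑ₙ aₙ/(λₙ² − z)` on `ℂ∖σ`. -/
theorem statement_17
    (lam mu : ℕ → ℝ)
    (hmu_pos : ∀ k, 0 < mu k)
    (h1 : ∀ k, mu k < lam k)
    (h2 : ∀ k, lam (k + 1) < mu k)
    (hlim : Tendsto lam atTop (nhds 0))
    (Φ : ℂ → ℂ)
    (hΦ : ∀ z ∈ (sigmaSet lam)ᶜ,
      Tendsto (fun N : ℕ => ∏ k ∈ Finset.range N, (z - (mu k : ℂ)) / (z - (lam k : ℂ)))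
        atTop (nhds (Φ z)))
    (a : ℕ → ℝ)
    (ha : ∀ n : ℕ,
      Tendsto (fun N : ℕ =>
          (lam n - mu n) *
            ∏ k ∈ (Finset.range N).erase n, (lam n - mu k) / (lam n - lam k))
        atTop (nhds (a n))) :
    (∀ n : ℕ, 0 < a n) ∧
    Summable (fun n : ℕ => a n / lam n) ∧
    (∑' n : ℕ, a n / lam n) ≤ 1 ∧
    (∀ K : Set ℂ, IsCompact K → K ⊆ (sigmaSet lam)ᶜ →
      TendstoUniformlyOn
        (fun (N : ℕ) (z : ℂ) => ∑ n ∈ Finset.range N, (a n : ℂ) / ((lam n : ℂ) - z))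
        (fun z : ℂ => ∑' n : ℕ, (a n : ℂ) / ((lam n : ℂ) - z)) atTop K) ∧
    (∀ z ∈ (sigmaSet lam)ᶜ, Φ z = 1 - ∑' n : ℕ, (a n : ℂ) / ((lam n : ℂ) - z)) := by

  have ha' : ∀ n, Tendsto (fun N => pfC lam mu N n) atTop (nhds (a n)) := ha
  have hlam_pos : ∀ k, 0 < lam k := fun k => (hmu_pos k).trans (h1 k)
  have hanti : StrictAnti lam := strictAnti_nat_of_succ_lt fun n => (h2 n).trans (h1 n)
  have hinj : Function.Injective lam := hanti.injective
  have hlt : ∀ k n, k < n → lam n < mu k := fun k n h =>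
    lt_of_le_of_lt (hanti.antitone h) (h2 k)
  have hmu_lt : ∀ n k, n < k → mu k < lam n := fun n k h => (h1 k).trans (hanti h)
  have hr : ∀ n k, k ≠ n → 0 < (lam n - mu k) / (lam n - lam k) := by
    intro n k hk
    rcases lt_or_gt_of_ne hk with h | h
    · exact div_pos_of_neg_of_neg (sub_neg.2 (hlt k n h)) (sub_neg.2 (hanti h))
    · exact div_pos (sub_pos.2 (hmu_lt n k h)) (sub_pos.2 (hanti h))
  have hc_pos : ∀ N n, 0 < pfC lam mu N n := by
    intro N n
    exact mul_pos (sub_pos.2 (h1 n))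
      (Finset.prod_pos fun k hk => hr n k (Finset.ne_of_mem_erase hk))
  have hr_le_one : ∀ n k, k < n → (lam n - mu k) / (lam n - lam k) ≤ 1 := by
    intro n k h
    rw [div_le_one_iff]
    right; right
    exact ⟨sub_neg.2 (hanti h), by linarith [h1 k]⟩
  have hr_ge_one : ∀ n k, n < k → 1 ≤ (lam n - mu k) / (lam n - lam k) := by
    intro n k h
    rw [le_div_iff₀ (sub_pos.2 (hanti h))]
    have := h1 k; linarith
  -- monotonicity in N for N ≥ n
  have hc_step : ∀ N n, n ≤ N → pfC lam mu N n ≤ pfC lam mu (N + 1) n := by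
    intro N n hn
    rcases eq_or_lt_of_le hn with rfl | h
    · apply le_of_eq
      unfold pfC
      rw [Finset.range_add_one, Finset.erase_insert (Finset.notMem_range_self),
        Finset.erase_eq_of_notMem (Finset.notMem_range_self)]
    · have heq : pfC lam mu (N + 1) n = (lam n - mu N) / (lam n - lam N) * pfC lam mu N n := by
        unfold pfC
        rw [Finset.range_add_one, Finset.erase_insert_of_ne (Nat.ne_of_gt h),
          Finset.prod_insert (by simp)]
        ring
      rw [heq]
      exact le_mul_of_one_le_left (hc_pos N n).le (hr_ge_one n N h)
  have hc_mono : ∀ n N M, n ≤ N → N ≤ M → pfC lam mu N n ≤ pfC lam mu M n := by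
    intro n N M hn hNM
    induction M, hNM using Nat.le_induction with
    | base => exact le_rfl
    | succ M hM ih => exact ih.trans (hc_step M n (hn.trans hM))
  have hca : ∀ n N, n ≤ N → pfC lam mu N n ≤ a n := by
    intro n N hn
    exact ge_of_tendsto (ha' n) (eventually_atTop.2 ⟨N, fun M hM => hc_mono n N M hn hM⟩)
  have hapos : ∀ n, 0 < a n := fun n => (hc_pos n n).trans_le (hca n n le_rfl)
  have hc_le : ∀ N n, pfC lam mu N n ≤ (lam n - mu n) + a n := by
    intro N n
    rcases le_total n N with h | h
    · exact (hca n N h).trans (le_add_of_nonneg_left (sub_pos.2 (h1 n)).le)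
    · have : pfC lam mu N n ≤ lam n - mu n := by
        unfold pfC
        apply mul_le_of_le_one_right (sub_pos.2 (h1 n)).le
        apply Finset.prod_le_one
        · intro k hk; exact (hr n k (Finset.ne_of_mem_erase hk)).le
        · intro k hk
          have hkn : k < n := lt_of_lt_of_le (Finset.mem_range.1 (Finset.mem_of_mem_erase hk)) h
          exact hr_le_one n k hkn
      exact this.trans (le_add_of_nonneg_right (hapos n).le)
  -- real identity at z = 0
  have hid0 : ∀ N, ∑ n ∈ Finset.range N, pfC lam mu N n / lam n ≤ 1 := by
    intro N
    have hpf := partialFraction lam mu hinj N 0 (fun k _ => (hlam_pos k).ne)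
    have hprod : 0 ≤ ∏ k ∈ Finset.range N, ((0:ℝ) - mu k) / ((0:ℝ) - lam k) :=
      Finset.prod_nonneg fun k _ =>
        le_of_lt (div_pos_of_neg_of_neg (by linarith [hmu_pos k]) (by linarith [hlam_pos k]))
    have heq : ∑ n ∈ Finset.range N, pfC lam mu N n / (lam n - 0)
        = 1 - ∏ k ∈ Finset.range N, ((0:ℝ) - mu k) / ((0:ℝ) - lam k) := by linarith [hpf]
    simp only [sub_zero] at heq
    linarith
  have hterm_nonneg : ∀ n, 0 ≤ a n / lam n := fun n => div_nonneg (hapos n).le (hlam_pos n).le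
  have hsum_le : ∀ N, ∑ n ∈ Finset.range N, a n / lam n ≤ 1 := by
    intro N
    have htend : Tendsto (fun M => ∑ n ∈ Finset.range N, pfC lam mu M n / lam n) atTop
        (𝓝 (∑ n ∈ Finset.range N, a n / lam n)) :=
      tendsto_finset_sum _ fun n _ => (ha' n).div_const _
    refine le_of_tendsto htend (eventually_atTop.2 ⟨N, fun M hM => ?_⟩)
    calc ∑ n ∈ Finset.range N, pfC lam mu M n / lam n
        ≤ ∑ n ∈ Finset.range M, pfC lam mu M n / lam n :=
          Finset.sum_le_sum_of_subset_of_nonneg (Finset.range_subset_range.2 hM)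
            (fun i _ _ => div_nonneg (hc_pos M i).le (hlam_pos i).le)
      _ ≤ 1 := hid0 M
  have hsummable : Summable fun n => a n / lam n :=
    summable_of_sum_range_le hterm_nonneg hsum_le
  have htsum_le : (∑' n, a n / lam n) ≤ 1 := Summable.tsum_le_of_sum_range_le hsummable hsum_le
  have hA : Summable a := by
    refine Summable.of_nonneg_of_le (fun n => (hapos n).le) (fun n => ?_)
      (hsummable.mul_right (lam 0))
    calc a n = a n / lam n * lam n := (div_mul_cancel₀ _ (hlam_pos n).ne').symm
      _ ≤ a n / lam n * lam 0 :=
        mul_le_mul_of_nonneg_left (hanti.antitone (Nat.zero_le n)) (hterm_nonneg n)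
  have hSub : Summable fun n => lam n - mu n := by
    apply summable_of_sum_range_le (c := lam 0) (fun n => (sub_pos.2 (h1 n)).le)
    intro N
    calc ∑ n ∈ Finset.range N, (lam n - mu n)
        ≤ ∑ n ∈ Finset.range N, (lam n - lam (n+1)) :=
          Finset.sum_le_sum fun n _ => by linarith [h2 n]
      _ = lam 0 - lam N := Finset.sum_range_sub' lam N
      _ ≤ lam 0 := by linarith [hlam_pos N]
  -- sigma compact
  have hσc : IsCompact (sigmaSet lam) := by
    have h0 : Tendsto (fun k => ((lam k : ℝ) : ℂ)) atTop (𝓝 0) := by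
      have := (Complex.continuous_ofReal.tendsto 0).comp hlim
      simpa [Function.comp_def] using this
    exact h0.isCompact_insert_range
  have hσcl : IsClosed (sigmaSet lam) := hσc.isClosed
  have hσne : (sigmaSet lam).Nonempty := ⟨0, Set.mem_insert _ _⟩
  have hmem : ∀ n, ((lam n : ℝ) : ℂ) ∈ sigmaSet lam := fun n => Set.mem_insert_of_mem _ ⟨n, rfl⟩
  have hdist : ∀ K : Set ℂ, IsCompact K → K ⊆ (sigmaSet lam)ᶜ →
      ∃ δ > 0, ∀ z ∈ K, ∀ n, δ ≤ ‖((lam n : ℝ) : ℂ) - z‖ := by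
    intro K hK hKc
    rcases K.eq_empty_or_nonempty with rfl | hne
    · exact ⟨1, one_pos, by simp⟩
    obtain ⟨z₀, hz₀K, hz₀min⟩ :=
      hK.exists_isMinOn hne (Metric.continuous_infDist_pt (sigmaSet lam)).continuousOn
    refine ⟨Metric.infDist z₀ (sigmaSet lam),
      (hσcl.notMem_iff_infDist_pos hσne).1 (hKc hz₀K), ?_⟩
    intro z hz n
    calc Metric.infDist z₀ (sigmaSet lam) ≤ Metric.infDist z (sigmaSet lam) := hz₀min hz
      _ ≤ dist z ((lam n : ℝ) : ℂ) := Metric.infDist_le_dist_of_mem (hmem n)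
      _ = ‖((lam n : ℝ) : ℂ) - z‖ := by rw [dist_eq_norm, norm_sub_rev]
  have hunif : ∀ K : Set ℂ, IsCompact K → K ⊆ (sigmaSet lam)ᶜ →
      TendstoUniformlyOn (fun N z => ∑ n ∈ Finset.range N, (a n : ℂ) / ((lam n : ℂ) - z))
        (fun z => ∑' n, (a n : ℂ) / ((lam n : ℂ) - z)) atTop K := by
    intro K hK hKc
    obtain ⟨δ, hδ, hδle⟩ := hdist K hK hKc
    apply tendstoUniformlyOn_tsum_nat (hA.div_const δ)
    intro n z hz
    rw [norm_div, Complex.norm_real, Real.norm_of_nonneg (hapos n).le]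
    gcongr
    · exact (hapos n).le
    · exact hδle z hz n
  have hid : ∀ z ∈ (sigmaSet lam)ᶜ, Φ z = 1 - ∑' n, (a n : ℂ) / ((lam n : ℂ) - z) := by
    intro z hz
    obtain ⟨δ, hδ, hδle⟩ := hdist {z} isCompact_singleton (Set.singleton_subset_iff.2 hz)
    have hδz : ∀ n, δ ≤ ‖((lam n : ℝ) : ℂ) - z‖ := fun n => hδle z rfl n
    have hzne : ∀ n, ((lam n : ℝ) : ℂ) - z ≠ 0 := by
      intro n h
      have := hδz n
      rw [h, norm_zero] at this
      linarith
    have hzneq : ∀ k, z ≠ ((lam k : ℝ) : ℂ) := fun k h => hzne k (by rw [h, sub_self])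
    have hinjC : Function.Injective fun k => ((lam k : ℝ) : ℂ) := by
      intro i j h
      have h' : ((lam i : ℝ) : ℂ) = ((lam j : ℝ) : ℂ) := h
      exact hinj (Complex.ofReal_injective h')
    have hcast : ∀ N n, pfC (fun k => ((lam k : ℝ) : ℂ)) (fun k => ((mu k : ℝ) : ℂ)) N n
        = ((pfC lam mu N n : ℝ) : ℂ) := by
      intro N n
      unfold pfC
      push_cast
      rfl
    have hfin : ∀ N, ∏ k ∈ Finset.range N, (z - (mu k : ℂ)) / (z - (lam k : ℂ))
        = 1 - ∑ n ∈ Finset.range N, ((pfC lam mu N n : ℝ) : ℂ) / ((lam n : ℂ) - z) := by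
      intro N
      rw [partialFraction _ _ hinjC N z (fun k _ => hzneq k)]
      simp only [hcast]
    set f : ℕ → ℕ → ℂ := fun N n =>
      if n ∈ Finset.range N then ((pfC lam mu N n : ℝ) : ℂ) / ((lam n : ℂ) - z) else 0 with hf
    have htsum_eq : ∀ N, ∑' n, f N n
        = ∑ n ∈ Finset.range N, ((pfC lam mu N n : ℝ) : ℂ) / ((lam n : ℂ) - z) := by
      intro N
      rw [tsum_eq_sum (s := Finset.range N) (fun n hn => if_neg hn)]
      exact Finset.sum_congr rfl fun n hn => if_pos hn
    have hbound : Summable fun n => ((lam n - mu n) + a n) / δ := (hSub.add hA).div_const δ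
    have hten : Tendsto (fun N => ∑' n, f N n) atTop
        (𝓝 (∑' n, (a n : ℂ) / ((lam n : ℂ) - z))) := by
      apply tendsto_tsum_of_dominated_convergence hbound
      · intro n
        apply Tendsto.congr' (f₁ := fun N => ((pfC lam mu N n : ℝ) : ℂ) / ((lam n : ℂ) - z))
        · filter_upwards [eventually_gt_atTop n] with N hN
          exact (if_pos (Finset.mem_range.2 hN)).symm
        · exact (Tendsto.comp (Complex.continuous_ofReal.tendsto _) (ha' n)).div_const _
      · filter_upwards with N n
        by_cases hn : n ∈ Finset.range N
        · simp only [hf, if_pos hn]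
          rw [norm_div, Complex.norm_real, Real.norm_of_nonneg (hc_pos N n).le]
          exact div_le_div₀ (add_nonneg (sub_pos.2 (h1 n)).le (hapos n).le)
            (hc_le N n) hδ (hδz n)
        · simp only [hf, if_neg hn, norm_zero]
          exact div_nonneg (add_nonneg (sub_pos.2 (h1 n)).le (hapos n).le) hδ.le
    have hR : Tendsto (fun N => ∏ k ∈ Finset.range N, (z - (mu k : ℂ)) / (z - (lam k : ℂ)))
        atTop (𝓝 (1 - ∑' n, (a n : ℂ) / ((lam n : ℂ) - z))) := by
      have hc := (tendsto_const_nhds (x := (1:ℂ)) (f := atTop)).sub hten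
      refine hc.congr fun N => ?_
      rw [htsum_eq, ← hfin]
    exact tendsto_nhds_unique (hΦ z hz) hR
  exact ⟨hapos, hsummable, htsum_le, hunif, hid⟩
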